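/- There is no APN function F: F_2^4 → F_2^4 all of whose nonzero components have algebraic degree exactly 3 (pure cubic). -/

import Mathlib

open scoped Classical

/-- Boolean functions on `m` bits. -/
abbrev BF (m : ℕ) := (Fin m → ZMod 2) → ZMod 2

/-- Vectorial Boolean functions on `m` bits. -/
abbrev VBF (m : ℕ) := (Fin m → ZMod 2) → (Fin m → ZMod 2)

/-- Derivative of a Boolean function in direction `a`. -/
def bDeriv {m : ℕ} (a : Fin m → ZMod 2) (f : BF m) : BF m := fun x => f (x + a) + f x

/-- Component of a vectorial Boolean function in direction `lam`. -/
def bComp {m : ℕ} (lam : Fin m → ZMod 2) (F : VBF m) : BF m := fun x => ∑ i, lam i * F x i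

/-- Fourier coefficient at 0:  `∑ x, (-1)^(f x)`. -/
def bFourier {m : ℕ} (f : BF m) : ℤ := ∑ x : Fin m → ZMod 2, (-1 : ℤ) ^ (f x).val

/-- A Boolean function is balanced if it takes the value 1 exactly `2^(m-1)` times. -/
def bBalanced {m : ℕ} (f : BF m) : Prop :=
  (Finset.univ.filter (fun x => f x = 1)).card = 2 ^ (m - 1)

/-- Almost Perfect Nonlinear: every derivative equation `F(x+a)+F(x)=b`, `a ≠ 0`,
has at most 2 solutions. -/
def bIsAPN {m : ℕ} (F : VBF m) : Prop :=
  ∀ a : Fin m → ZMod 2, a ≠ 0 → ∀ b : Fin m → ZMod 2,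
    (Finset.univ.filter (fun x => F (x + a) + F x = b)).card ≤ 2

/-- Bent: all nonzero derivatives are balanced. -/
def bBent {m : ℕ} (f : BF m) : Prop := ∀ a, a ≠ 0 → bBalanced (bDeriv a f)

/-- ANF coefficient of `f` at the monomial indexed by `S`. -/
def bAnfCoeff {m : ℕ} (f : BF m) (S : Finset (Fin m)) : ZMod 2 :=
  ∑ x : Fin m → ZMod 2, (∏ i ∈ Sᶜ, (1 + x i)) * f x

/-- Algebraic degree at most `d`. -/
def bDegLE {m : ℕ} (f : BF m) (d : ℕ) : Prop :=
  ∀ S : Finset (Fin m), d < S.card → bAnfCoeff f S = 0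

/-- Algebraic degree of a Boolean function. -/
noncomputable def bAlgDeg {m : ℕ} (f : BF m) : ℕ := sInf {d | bDegLE f d}

/-- The restriction of `f` to the subspace `V` is affine. -/
def bAffineOn {m : ℕ} (f : BF m) (V : Submodule (ZMod 2) (Fin m → ZMod 2)) : Prop :=
  ∀ x ∈ V, ∀ y ∈ V, ∀ z ∈ V, f (x + y + z) = f x + f y + f z

/-- The restriction of `f` to the subspace `U` is bent: every derivative in a nonzero
direction of `U` is balanced on `U`. -/
def bBentOn {m : ℕ} (f : BF m) (U : Submodule (ZMod 2) (Fin m → ZMod 2)) : Prop :=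
  ∀ a ∈ U, a ≠ 0 →
    2 * (Finset.univ.filter (fun x => x ∈ U ∧ f (x + a) + f x = 1)).card
      = (Finset.univ.filter (fun x => x ∈ U)).card

/-- Partially bent Boolean function. -/
def bPartiallyBent {m : ℕ} (f : BF m) : Prop :=
  ∃ V U : Submodule (ZMod 2) (Fin m → ZMod 2), IsCompl V U ∧ bAffineOn f V ∧ bBentOn f U

/-- `a` is a linear structure of `f`: the derivative `D_a f` is constant. -/
def bLinStruct {m : ℕ} (f : BF m) (a : Fin m → ZMod 2) : Prop :=
  ∃ c : ZMod 2, ∀ x, f (x + a) + f x = c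

/-- The set of directions in which the derivative of `f` is balanced. -/
noncomputable def bGamma {m : ℕ} (f : BF m) : Finset (Fin m → ZMod 2) :=
  Finset.univ.filter (fun a => bBalanced (bDeriv a f))

open Finset

abbrev V4 := Fin 4 → ZMod 2

def chi (u : ZMod 2) : ℤ := if u = 1 then -1 else 1

lemma chi_add (u v : ZMod 2) : chi (u + v) = chi u * chi v := by revert u v; decide

lemma chi_zero : chi 0 = 1 := rfl

def vdot (u v : V4) : ZMod 2 := ∑ i, u i * v i

lemma vdot_comm (u v : V4) : vdot u v = vdot v u := by
  unfold vdot; exact Finset.sum_congr rfl fun i _ => mul_comm _ _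

lemma vdot_add_right (u v w : V4) : vdot u (v + w) = vdot u v + vdot u w := by
  unfold vdot
  rw [← Finset.sum_add_distrib]
  exact Finset.sum_congr rfl fun i _ => by simp [Pi.add_apply, mul_add]

lemma vdot_zero_right (u : V4) : vdot u 0 = 0 := by
  unfold vdot; simp

-- single coordinate vector
def ecoord (j : Fin 4) : V4 := fun i => if i = j then 1 else 0

lemma vdot_ecoord (j : Fin 4) (x : V4) : vdot (ecoord j) x = x j := by
  unfold vdot ecoord
  rw [Finset.sum_eq_single j] <;> simp +contextual

lemma zmod2_ne_zero {u : ZMod 2} (h : u ≠ 0) : u = 1 := by revert u; decide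

lemma zmod2_ne_one {u : ZMod 2} (h : u ≠ 1) : u = 0 := by revert u; decide

/-- orthogonality -/
lemma sum_chi_vdot_eq_zero {v : V4} (hv : v ≠ 0) : ∑ u : V4, chi (vdot u v) = 0 := by
  have hex : ∃ i, v i ≠ 0 := by
    by_contra h
    push_neg at h
    exact hv (funext fun i => h i)
  obtain ⟨i, hi⟩ := hex
  have hvi : v i = 1 := zmod2_ne_zero hi
  apply Finset.sum_ninvolution (g := fun u => u + ecoord i)
  · intro u
    have : vdot (u + ecoord i) v = vdot u v + 1 := by
      rw [vdot_comm, vdot_add_right, vdot_comm v u, vdot_comm v (ecoord i), vdot_ecoord, hvi]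
    rw [this, chi_add]
    have : chi (vdot u v) = 1 ∨ chi (vdot u v) = -1 := by
      unfold chi; split <;> simp
    rcases this with h | h <;> rw [h] <;> rfl
  · intro u _
    intro h
    have := congrFun h i
    simp [ecoord] at this
  · intro u; exact Finset.mem_univ _
  · intro u
    funext j
    simp only [Pi.add_apply, ecoord]
    split
    · rw [add_assoc]
      norm_num
      decide
    · simp

def cnt (g : BF 4) : ℕ := (Finset.univ.filter (fun x => g x = 1)).card

lemma zmod2_add_self (u : ZMod 2) : u + u = 0 := by revert u; decide

lemma v4_add_self (a : V4) : a + a = 0 := funext fun j => zmod2_add_self (a j)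

lemma card_univ_v4 : (Finset.univ : Finset V4).card = 16 := by decide

lemma cnt_le (g : BF 4) : cnt g ≤ 16 := by
  unfold cnt
  calc (Finset.univ.filter (fun x => g x = 1)).card ≤ (Finset.univ : Finset V4).card :=
        Finset.card_filter_le _ _
    _ = 16 := card_univ_v4

lemma sum_chi_eq (s : Finset V4) (g : BF 4) :
    ∑ x ∈ s, chi (g x) = (s.card : ℤ) - 2 * ((s.filter (fun x => g x = 1)).card : ℤ) := by
  rw [← Finset.sum_filter_add_sum_filter_not s (fun x => g x = 1)]
  have h1 : ∑ x ∈ s.filter (fun x => g x = 1), chi (g x)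
      = -((s.filter (fun x => g x = 1)).card : ℤ) := by
    rw [Finset.sum_congr rfl (fun x hx => show chi (g x) = -1 by
      rw [(Finset.mem_filter.1 hx).2]; rfl)]
    simp
  have h2 : ∑ x ∈ s.filter (fun x => ¬ g x = 1), chi (g x)
      = ((s.filter (fun x => ¬ g x = 1)).card : ℤ) := by
    rw [Finset.sum_congr rfl (fun x hx => show chi (g x) = 1 by
      rw [zmod2_ne_one (Finset.mem_filter.1 hx).2]; rfl)]
    simp
  rw [h1, h2]
  have h3 := Finset.card_filter_add_card_filter_not (s := s) (p := fun x => g x = 1)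
  push_cast [← h3]
  ring

lemma sum_zmod_eq_card (s : Finset V4) (g : BF 4) :
    ∑ x ∈ s, g x = ((s.filter (fun x => g x = 1)).card : ZMod 2) := by
  rw [← Finset.sum_filter_add_sum_filter_not s (fun x => g x = 1)]
  have h2 : ∑ x ∈ s.filter (fun x => ¬ g x = 1), g x = 0 :=
    Finset.sum_eq_zero fun x hx => zmod2_ne_one (Finset.mem_filter.1 hx).2
  have h1 : ∑ x ∈ s.filter (fun x => g x = 1), g x
      = ((s.filter (fun x => g x = 1)).card : ZMod 2) := by
    rw [Finset.sum_congr rfl (fun x hx => (Finset.mem_filter.1 hx).2)]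
    simp [mul_comm]
  rw [h1, h2, add_zero]

lemma anf_univ (f : BF 4) : bAnfCoeff f Finset.univ = ∑ x : V4, f x := by
  unfold bAnfCoeff
  simp

lemma anf_card3 (f : BF 4) (S : Finset (Fin 4)) (j : Fin 4) (hS : Sᶜ = {j}) :
    bAnfCoeff f S = ∑ x ∈ Finset.univ.filter (fun x : V4 => x j = 0), f x := by
  unfold bAnfCoeff
  rw [hS]
  rw [← Finset.sum_filter_add_sum_filter_not Finset.univ (fun x : V4 => x j = 0)]
  have h1 : ∀ x ∈ Finset.univ.filter (fun x : V4 => x j = 0),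
      (∏ i ∈ ({j} : Finset (Fin 4)), (1 + x i)) * f x = f x := by
    intro x hx
    rw [Finset.prod_singleton, (Finset.mem_filter.1 hx).2]
    ring
  have h2 : ∀ x ∈ Finset.univ.filter (fun x : V4 => ¬ x j = 0),
      (∏ i ∈ ({j} : Finset (Fin 4)), (1 + x i)) * f x = 0 := by
    intro x hx
    rw [Finset.prod_singleton, zmod2_ne_zero (Finset.mem_filter.1 hx).2]
    norm_num
    left; decide
  rw [Finset.sum_congr rfl h1, Finset.sum_congr rfl h2, Finset.sum_const, smul_zero, add_zero]

lemma bDeriv_shift (f : BF 4) (a : V4) (x : V4) : bDeriv a f (x + a) = bDeriv a f x := by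
  unfold bDeriv
  rw [add_assoc, v4_add_self, add_zero, add_comm]

lemma exists_one_of_ne_zero {a : V4} (ha : a ≠ 0) : ∃ i, a i = 1 := by
  by_contra h
  push_neg at h
  exact ha (funext fun i => zmod2_ne_one (h i))

/-- main mod 4 lemma -/
lemma deriv_cnt_mod4 (f : BF 4) (hdeg : bAnfCoeff f Finset.univ = 0) {a : V4} (ha : a ≠ 0) :
    4 ∣ cnt (bDeriv a f) := by
  obtain ⟨i, hi⟩ := exists_one_of_ne_zero ha
  set D := bDeriv a f with hD
  set s := Finset.univ.filter (fun x => D x = 1) with hs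
  have hsplit : cnt D = (s.filter (fun x => x i = 0)).card + (s.filter (fun x => ¬ x i = 0)).card :=
    (Finset.card_filter_add_card_filter_not (s := s) (p := fun x => x i = 0)).symm
  have hbij : (s.filter fun x => ¬ x i = 0).card = (s.filter (fun x => x i = 0)).card := by
    apply Finset.card_nbij' (i := fun x => x + a) (j := fun x => x + a)
    · intro x hx
      rw [Finset.mem_coe, Finset.mem_filter] at hx ⊢
      obtain ⟨hx1, hx2⟩ := hx
      rw [hs, Finset.mem_filter] at hx1 ⊢
      refine ⟨⟨Finset.mem_univ _, ?_⟩, ?_⟩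
      · show bDeriv a f (x + a) = 1
        rw [bDeriv_shift]; exact hx1.2
      · show x i + a i = 0
        rw [hi, zmod2_ne_zero hx2]; decide
    · intro x hx
      rw [Finset.mem_coe, Finset.mem_filter] at hx ⊢
      obtain ⟨hx1, hx2⟩ := hx
      rw [hs, Finset.mem_filter] at hx1 ⊢
      refine ⟨⟨Finset.mem_univ _, ?_⟩, ?_⟩
      · show bDeriv a f (x + a) = 1
        rw [bDeriv_shift]; exact hx1.2
      · show ¬ (x i + a i = 0)
        rw [hi, hx2]; decide
    · intro x _; show x + a + a = x; rw [add_assoc, v4_add_self, add_zero]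
    · intro x _; show x + a + a = x; rw [add_assoc, v4_add_self, add_zero]
  -- parity of the half count
  have hpar : ((s.filter (fun x => x i = 0)).card : ZMod 2) = 0 := by
    have hcomm : s.filter (fun x => x i = 0)
        = (Finset.univ.filter (fun x : V4 => x i = 0)).filter (fun x => D x = 1) := by
      rw [hs, Finset.filter_filter, Finset.filter_filter]
      exact Finset.filter_congr (fun x _ => by tauto)
    rw [hcomm, ← sum_zmod_eq_card]
    have hsum : ∑ x ∈ Finset.univ.filter (fun x : V4 => x i = 0), D x
        = (∑ x ∈ Finset.univ.filter (fun x : V4 => x i = 0), f (x + a))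
          + ∑ x ∈ Finset.univ.filter (fun x : V4 => x i = 0), f x := by
      rw [← Finset.sum_add_distrib]; rfl
    have hmove : ∑ x ∈ Finset.univ.filter (fun x : V4 => x i = 0), f (x + a)
        = ∑ x ∈ Finset.univ.filter (fun x : V4 => ¬ x i = 0), f x := by
      apply Finset.sum_nbij' (i := fun x => x + a) (j := fun x => x + a)
      · intro x hx
        rw [Finset.mem_filter] at hx ⊢
        refine ⟨Finset.mem_univ _, ?_⟩
        show ¬ (x i + a i = 0)
        rw [hi, hx.2]; decide
      · intro x hx
        rw [Finset.mem_filter] at hx ⊢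
        refine ⟨Finset.mem_univ _, ?_⟩
        show x i + a i = 0
        rw [hi, zmod2_ne_zero hx.2]; decide
      · intro x _; rw [add_assoc, v4_add_self, add_zero]
      · intro x _; rw [add_assoc, v4_add_self, add_zero]
      · intro x _; rfl
    rw [hsum, hmove, add_comm, Finset.sum_filter_add_sum_filter_not, ← anf_univ, hdeg]
  have h2 : 2 ∣ (s.filter (fun x => x i = 0)).card :=
    (ZMod.natCast_eq_zero_iff _ 2).1 hpar
  obtain ⟨m, hm⟩ := h2
  have : cnt D = 4 * m := by rw [hsplit, hbij, hm]; ring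
  exact ⟨m, this⟩

def Fa (f : BF 4) (a : V4) : ℤ := ∑ x : V4, chi (bDeriv a f x)

def Wu (f : BF 4) (u : V4) : ℤ := ∑ x : V4, chi (f x + vdot u x)

lemma Fa_eq (f : BF 4) (a : V4) : Fa f a = 16 - 2 * (cnt (bDeriv a f) : ℤ) := by
  unfold Fa cnt
  rw [sum_chi_eq, card_univ_v4]
  norm_num

lemma Fa_zero (f : BF 4) : Fa f 0 = 16 := by
  unfold Fa
  have : ∀ x : V4, chi (bDeriv 0 f x) = 1 := by
    intro x
    unfold bDeriv
    rw [add_zero, zmod2_add_self]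
    rfl
  rw [Finset.sum_congr rfl (fun x _ => this x)]
  rw [Finset.sum_const, card_univ_v4]
  rfl

lemma Fa_cases (f : BF 4) (hdeg : bAnfCoeff f Finset.univ = 0) {a : V4} (ha : a ≠ 0) :
    Fa f a = 0 ∨ Fa f a = 8 ∨ Fa f a = -8 ∨ Fa f a = 16 ∨ Fa f a = -16 := by
  obtain ⟨k, hk⟩ := deriv_cnt_mod4 f hdeg ha
  have h1 : cnt (bDeriv a f) ≤ 16 := cnt_le _
  have h2 := Fa_eq f a
  omega

lemma Fa_const_of_sq (f : BF 4) {a : V4} (h : Fa f a = 16 ∨ Fa f a = -16) :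
    ∃ c, ∀ x, bDeriv a f x = c := by
  have h2 := Fa_eq f a
  rcases h with h | h
  · refine ⟨0, fun x => ?_⟩
    have hc : cnt (bDeriv a f) = 0 := by omega
    have := Finset.card_eq_zero.1 hc
    by_contra hne
    have hx1 : bDeriv a f x = 1 := zmod2_ne_zero hne
    have : x ∈ Finset.univ.filter (fun x => bDeriv a f x = 1) :=
      Finset.mem_filter.2 ⟨Finset.mem_univ _, hx1⟩
    rw [‹Finset.univ.filter (fun x => bDeriv a f x = 1) = ∅›] at this
    exact absurd this (Finset.notMem_empty _)
  · refine ⟨1, fun x => ?_⟩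
    have hc : cnt (bDeriv a f) = 16 := by omega
    by_contra hne
    have hx0 : bDeriv a f x = 0 := zmod2_ne_one hne
    have hsub : Finset.univ.filter (fun x => bDeriv a f x = 1) ⊆ Finset.univ.erase x := by
      intro y hy
      rw [Finset.mem_filter] at hy
      apply Finset.mem_erase.2
      refine ⟨?_, Finset.mem_univ _⟩
      intro hyx; rw [hyx] at hy; rw [hy.2] at hx0; exact absurd hx0 (by decide)
    have := Finset.card_le_card hsub
    rw [Finset.card_erase_of_mem (Finset.mem_univ _), card_univ_v4] at this
    unfold cnt at hc
    omega

lemma sum_coord (i : Fin 4) : ∑ x : V4, x i = 0 := by revert i; decide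

lemma Wu_sq (f : BF 4) (u : V4) :
    ∑ a : V4, Fa f a * chi (vdot u a) = (Wu f u) ^ 2 := by
  have key : ∀ a : V4, Fa f a * chi (vdot u a)
      = ∑ x : V4, chi (f (x + a) + f x + vdot u (x + (x + a))) := by
    intro a
    unfold Fa
    rw [Finset.sum_mul]
    apply Finset.sum_congr rfl
    intro x _
    rw [← chi_add]
    have hxa : x + (x + a) = a := by rw [← add_assoc, v4_add_self, zero_add]
    rw [hxa]
    rfl
  rw [Finset.sum_congr rfl (fun a _ => key a)]
  rw [Finset.sum_comm]
  have inner : ∀ x : V4, ∑ a : V4, chi (f (x + a) + f x + vdot u (x + (x + a)))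
      = ∑ y : V4, chi (f y + f x + vdot u (x + y)) := by
    intro x
    apply Fintype.sum_bijective (fun a : V4 => x + a)
    · constructor
      · intro a b hab
        have h2 := congrArg (fun z => x + z) hab
        simp only at h2
        rwa [← add_assoc, v4_add_self, zero_add, ← add_assoc, v4_add_self, zero_add] at h2
      · intro y
        exact ⟨x + y, show x + (x + y) = y by rw [← add_assoc, v4_add_self, zero_add]⟩
    · intro a; rfl
  rw [Finset.sum_congr rfl (fun x _ => inner x)]
  rw [Wu, sq, Finset.sum_mul_sum]
  apply Finset.sum_congr rfl
  intro x _
  apply Finset.sum_congr rfl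
  intro y _
  rw [← chi_add]
  congr 1
  rw [vdot_add_right]
  ring

lemma Wu_mod4 (f : BF 4) (hdeg : bAnfCoeff f Finset.univ = 0) (u : V4) :
    ∃ t : ℤ, Wu f u = 4 * t ∧ -4 ≤ t ∧ t ≤ 4 := by
  have he : Wu f u = 16 - 2 * (cnt (fun x => f x + vdot u x) : ℤ) := by
    unfold Wu cnt
    rw [sum_chi_eq, card_univ_v4]; norm_num
  have hpar : ((cnt (fun x => f x + vdot u x) : ℕ) : ZMod 2) = 0 := by
    unfold cnt
    rw [← sum_zmod_eq_card]
    have : ∑ x : V4, (f x + vdot u x) = (∑ x : V4, f x) + ∑ x : V4, vdot u x :=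
      Finset.sum_add_distrib
    rw [this, ← anf_univ, hdeg, zero_add]
    unfold vdot
    rw [Finset.sum_comm]
    apply Finset.sum_eq_zero
    intro i _
    rw [← Finset.mul_sum, sum_coord, mul_zero]
  have h2 : 2 ∣ cnt (fun x => f x + vdot u x) :=
    (ZMod.natCast_eq_zero_iff _ 2).1 hpar
  have h3 : cnt (fun x => f x + vdot u x) ≤ 16 := cnt_le _
  obtain ⟨m, hm⟩ := h2
  exact ⟨4 - m, by omega, by omega, by omega⟩

lemma v4_add_eq_zero {a b : V4} : a + b = 0 ↔ a = b := by
  constructor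
  · intro h
    have h2 := congrArg (fun z => z + b) h
    rwa [add_assoc, v4_add_self, add_zero, zero_add] at h2
  · rintro rfl; exact v4_add_self a

lemma chi_one : chi 1 = -1 := rfl

lemma sum_chi_total (v : V4) : ∑ u : V4, chi (vdot u v) = if v = 0 then 16 else 0 := by
  split
  · rename_i h; subst h
    rw [Finset.sum_congr rfl (fun u _ => by rw [vdot_zero_right] : ∀ u ∈ Finset.univ, chi (vdot u (0:V4)) = chi 0)]
    rw [Finset.sum_const, card_univ_v4]
    rfl
  · exact sum_chi_vdot_eq_zero ‹_›

lemma four_smul_zmod2 (c : ZMod 2) : (4 : ℕ) • c = 0 := by revert c; decide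

lemma card_K (j j' : Fin 4) (h : j ≠ j') :
    (Finset.univ.filter (fun x : V4 => x j = 0 ∧ x j' = 0)).card = 4 := by
  revert j j' h; decide

/-- a nonzero linear structure avoiding coordinate `j` kills the cubic coefficient there -/
lemma anf3_zero_of_linstruct (f : BF 4) {d : V4} (hd0 : d ≠ 0) {j : Fin 4} (hdj : d j = 0)
    {c : ZMod 2} (hc : ∀ x, bDeriv d f x = c) :
    ∑ x ∈ Finset.univ.filter (fun x : V4 => x j = 0), f x = 0 := by
  obtain ⟨j', hj'⟩ := exists_one_of_ne_zero hd0
  have hjj' : j ≠ j' := by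
    intro h; rw [← h, hdj] at hj'; exact absurd hj' (by decide)
  have hsplit := Finset.sum_filter_add_sum_filter_not
    (Finset.univ.filter (fun x : V4 => x j = 0)) (fun x : V4 => x j' = 0) f
  rw [← hsplit]
  have hK : (Finset.univ.filter (fun x : V4 => x j = 0)).filter (fun x : V4 => x j' = 0)
      = Finset.univ.filter (fun x : V4 => x j = 0 ∧ x j' = 0) := by
    rw [Finset.filter_filter]
  have hmove : ∑ x ∈ (Finset.univ.filter (fun x : V4 => x j = 0)).filter (fun x : V4 => ¬ x j' = 0), f x
      = ∑ x ∈ (Finset.univ.filter (fun x : V4 => x j = 0)).filter (fun x : V4 => x j' = 0), f (x + d) := by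
    symm
    apply Finset.sum_nbij' (i := fun x => x + d) (j := fun x => x + d)
    · intro x hx
      rw [Finset.filter_filter, Finset.mem_filter] at hx ⊢
      refine ⟨Finset.mem_univ _, ?_, ?_⟩
      · show x j + d j = 0
        rw [hdj, hx.2.1]; decide
      · show ¬ (x j' + d j' = 0)
        rw [hj', hx.2.2]; decide
    · intro x hx
      rw [Finset.filter_filter, Finset.mem_filter] at hx ⊢
      refine ⟨Finset.mem_univ _, ?_, ?_⟩
      · show x j + d j = 0
        rw [hdj, hx.2.1]; decide
      · show x j' + d j' = 0
        rw [hj', zmod2_ne_zero hx.2.2]; decide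
    · intro x _; rw [add_assoc, v4_add_self, add_zero]
    · intro x _; rw [add_assoc, v4_add_self, add_zero]
    · intro x _; rfl
  rw [hmove, ← Finset.sum_add_distrib]
  have : ∀ x ∈ (Finset.univ.filter (fun x : V4 => x j = 0)).filter (fun x : V4 => x j' = 0),
      f x + f (x + d) = c := by
    intro x _
    rw [add_comm]; exact hc x
  rw [Finset.sum_congr rfl this, Finset.sum_const, hK, card_K j j' hjj', four_smul_zmod2]

lemma int_sq_16 {w : ℤ} (h : w ^ 2 = 16) : w = 4 ∨ w = -4 := by
  have h2 : (w - 4) * (w + 4) = 0 := by ring_nf; linarith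
  rcases mul_eq_zero.1 h2 with h3 | h3
  · left; linarith
  · right; linarith

lemma card_Hj (j : Fin 4) : (Finset.univ.filter (fun x : V4 => x j = 0)).card = 8 := by
  revert j; decide

lemma card_Hj' (j : Fin 4) : (Finset.univ.filter (fun x : V4 => ¬ x j = 0)).card = 8 := by
  revert j; decide

/-- in the bent case cubic coefficients vanish -/
lemma bent_cubic_coeff_zero (f : BF 4) (j : Fin 4)
    (h0 : (Wu f 0) ^ 2 = 16) (hj : (Wu f (ecoord j)) ^ 2 = 16) :
    ∑ x ∈ Finset.univ.filter (fun x : V4 => x j = 0), f x = 0 := by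
  have hc1 := card_Hj' j
  have hW0 : Wu f 0 = (16 : ℤ)
      - 2 * (((Finset.univ.filter (fun x : V4 => x j = 0)).filter (fun x => f x = 1)).card : ℤ)
      - 2 * (((Finset.univ.filter (fun x : V4 => ¬ x j = 0)).filter (fun x => f x = 1)).card : ℤ) := by
    unfold Wu
    have hterm : ∀ x ∈ (Finset.univ : Finset V4), chi (f x + vdot 0 x) = chi (f x) := by
      intro x _
      congr 1
      rw [show vdot 0 x = 0 from by unfold vdot; simp, add_zero]
    rw [Finset.sum_congr rfl hterm]
    rw [← Finset.sum_filter_add_sum_filter_not Finset.univ (fun x : V4 => x j = 0)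
      (fun x => chi (f x))]
    rw [sum_chi_eq, sum_chi_eq, card_Hj, hc1]
    ring
  have hWj : Wu f (ecoord j)
      = 2 * (((Finset.univ.filter (fun x : V4 => ¬ x j = 0)).filter (fun x => f x = 1)).card : ℤ)
      - 2 * (((Finset.univ.filter (fun x : V4 => x j = 0)).filter (fun x => f x = 1)).card : ℤ) := by
    unfold Wu
    have hterm : ∀ x ∈ (Finset.univ : Finset V4),
        chi (f x + vdot (ecoord j) x) = chi (f x) * chi (x j) := by
      intro x _
      rw [chi_add, vdot_ecoord]
    rw [Finset.sum_congr rfl hterm]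
    rw [← Finset.sum_filter_add_sum_filter_not Finset.univ (fun x : V4 => x j = 0)]
    have e1 : ∀ x ∈ Finset.univ.filter (fun x : V4 => x j = 0),
        chi (f x) * chi (x j) = chi (f x) := by
      intro x hx
      rw [(Finset.mem_filter.1 hx).2, chi_zero, mul_one]
    have e2 : ∀ x ∈ Finset.univ.filter (fun x : V4 => ¬ x j = 0),
        chi (f x) * chi (x j) = -chi (f x) := by
      intro x hx
      rw [zmod2_ne_zero (Finset.mem_filter.1 hx).2, chi_one]
      ring
    rw [Finset.sum_congr rfl e1, Finset.sum_congr rfl e2, Finset.sum_neg_distrib]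
    rw [sum_chi_eq, sum_chi_eq, card_Hj, hc1]
    ring
  have c0 := int_sq_16 h0
  have cj := int_sq_16 hj
  rw [hW0] at c0
  rw [hWj] at cj
  have hdvd : 2 ∣ ((Finset.univ.filter (fun x : V4 => x j = 0)).filter (fun x => f x = 1)).card := by
    clear h0 hj hW0 hWj hc1
    generalize hA : ((Finset.univ.filter (fun x : V4 => x j = 0)).filter (fun x => f x = 1)).card = A at c0 cj ⊢
    generalize hB : ((Finset.univ.filter (fun x : V4 => ¬ x j = 0)).filter (fun x => f x = 1)).card = B at c0 cj
    clear hA hB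
    omega
  rw [sum_zmod_eq_card]
  exact (ZMod.natCast_eq_zero_iff _ 2).2 hdvd

lemma abs_chi (v : ZMod 2) : |chi v| = 1 := by revert v; decide

lemma moment1 (f : BF 4) (B : Finset V4) (hB : ∀ a ∈ B, a ≠ 0) :
    ∑ u : V4, (∑ a ∈ B, Fa f a * chi (vdot u a)) = 0 := by
  rw [Finset.sum_comm]
  apply Finset.sum_eq_zero
  intro a ha
  rw [← Finset.mul_sum, sum_chi_vdot_eq_zero (hB a ha), mul_zero]

lemma moment2 (f : BF 4) (B : Finset V4) :
    ∑ u : V4, (∑ a ∈ B, Fa f a * chi (vdot u a)) ^ 2 = 16 * ∑ a ∈ B, (Fa f a) ^ 2 := by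
  have expand : ∀ u : V4, (∑ a ∈ B, Fa f a * chi (vdot u a)) ^ 2
      = ∑ a ∈ B, ∑ b ∈ B, (Fa f a * Fa f b) * chi (vdot u (a + b)) := by
    intro u
    rw [sq, Finset.sum_mul_sum]
    apply Finset.sum_congr rfl; intro a _
    apply Finset.sum_congr rfl; intro b _
    rw [vdot_add_right, chi_add]; ring
  rw [Finset.sum_congr rfl (fun u _ => expand u), Finset.sum_comm]
  have inner : ∀ a ∈ B,
      ∑ u : V4, ∑ b ∈ B, (Fa f a * Fa f b) * chi (vdot u (a + b)) = 16 * (Fa f a) ^ 2 := by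
    intro a ha
    rw [Finset.sum_comm]
    have hb : ∀ b ∈ B, ∑ u : V4, (Fa f a * Fa f b) * chi (vdot u (a + b))
        = if a + b = 0 then 16 * (Fa f a * Fa f b) else 0 := by
      intro b _
      rw [← Finset.mul_sum, sum_chi_total]
      split <;> ring
    rw [Finset.sum_congr rfl hb]
    rw [Finset.sum_eq_single_of_mem a ha (fun b _ hba => by
      rw [if_neg]
      intro hz
      exact hba (v4_add_eq_zero.1 hz).symm)]
    rw [if_pos (v4_add_self a)]
    ring
  rw [Finset.sum_congr rfl inner, ← Finset.mul_sum]

lemma moment3 (f : BF 4) (B : Finset V4) :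
    ∑ u : V4, (∑ a ∈ B, Fa f a * chi (vdot u a)) ^ 3
      = 16 * ∑ a ∈ B, ∑ b ∈ B, ∑ c ∈ B,
          (if a + b + c = 0 then Fa f a * Fa f b * Fa f c else 0) := by
  have expand : ∀ u : V4, (∑ a ∈ B, Fa f a * chi (vdot u a)) ^ 3
      = ∑ a ∈ B, ∑ b ∈ B, ∑ c ∈ B, (Fa f a * Fa f b * Fa f c) * chi (vdot u (a + b + c)) := by
    intro u
    have h1 : (∑ a ∈ B, Fa f a * chi (vdot u a)) ^ 3
        = (∑ a ∈ B, ∑ b ∈ B, (Fa f a * chi (vdot u a)) * (Fa f b * chi (vdot u b)))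
          * (∑ c ∈ B, Fa f c * chi (vdot u c)) := by
      rw [← Finset.sum_mul_sum]; ring
    rw [h1, Finset.sum_mul]
    apply Finset.sum_congr rfl; intro a _
    rw [Finset.sum_mul]
    apply Finset.sum_congr rfl; intro b _
    rw [Finset.mul_sum]
    apply Finset.sum_congr rfl; intro c _
    rw [vdot_add_right, vdot_add_right, chi_add, chi_add]; ring
  rw [Finset.sum_congr rfl (fun u _ => expand u), Finset.sum_comm]
  rw [Finset.mul_sum]
  apply Finset.sum_congr rfl; intro a _
  rw [Finset.sum_comm, Finset.mul_sum]
  apply Finset.sum_congr rfl; intro b _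
  rw [Finset.sum_comm, Finset.mul_sum]
  apply Finset.sum_congr rfl; intro c _
  rw [← Finset.mul_sum, sum_chi_total]
  split <;> ring

lemma classify_sum (φ : V4 → ℤ) (h : ∀ u : V4, φ u = -16 ∨ φ u = 0 ∨ φ u = 48)
    (g : ℤ → ℤ) (hg : g 0 = 0) :
    ∑ u : V4, g (φ u)
      = ((Finset.univ.filter (fun u : V4 => φ u = 48)).card : ℤ) * g 48
        + ((Finset.univ.filter (fun u : V4 => φ u = -16)).card : ℤ) * g (-16) := by
  rw [← Finset.sum_filter_add_sum_filter_not Finset.univ (fun u : V4 => φ u = 48)]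
  have h1 : ∑ u ∈ Finset.univ.filter (fun u : V4 => φ u = 48), g (φ u)
      = ((Finset.univ.filter (fun u : V4 => φ u = 48)).card : ℤ) * g 48 := by
    rw [Finset.sum_congr rfl (fun u hu => by rw [(Finset.mem_filter.1 hu).2])]
    rw [Finset.sum_const, nsmul_eq_mul]
  have h2 : ∑ u ∈ Finset.univ.filter (fun u : V4 => ¬ φ u = 48), g (φ u)
      = ((Finset.univ.filter (fun u : V4 => φ u = -16)).card : ℤ) * g (-16) := by
    rw [← Finset.sum_filter_add_sum_filter_not
      (Finset.univ.filter (fun u : V4 => ¬ φ u = 48)) (fun u : V4 => φ u = -16)]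
    have e1 : (Finset.univ.filter (fun u : V4 => ¬ φ u = 48)).filter (fun u : V4 => φ u = -16)
        = Finset.univ.filter (fun u : V4 => φ u = -16) := by
      rw [Finset.filter_filter]
      apply Finset.filter_congr
      intro u _
      constructor
      · intro hu; exact hu.2
      · intro hu; exact ⟨by rw [hu]; decide, hu⟩
    have e2 : ∑ u ∈ (Finset.univ.filter (fun u : V4 => ¬ φ u = 48)).filter
        (fun u : V4 => ¬ φ u = -16), g (φ u) = 0 := by
      apply Finset.sum_eq_zero
      intro u hu
      rw [Finset.filter_filter, Finset.mem_filter] at hu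
      have h0 : φ u = 0 := by
        rcases h u with h' | h' | h'
        · exact absurd h' hu.2.2
        · exact h'
        · exact absurd h' hu.2.1
      rw [h0, hg]
    rw [e2, add_zero]
    rw [Finset.sum_congr e1 (fun u hu => by rw [(Finset.mem_filter.1 hu).2])]
    rw [Finset.sum_const, nsmul_eq_mul]
  rw [h1, h2]

lemma v4_xxz (x z : V4) : x + x + z = z := by rw [v4_add_self, zero_add]
lemma v4_xzx (x z : V4) : x + z + x = z := by
  rw [add_comm x z, add_assoc, v4_add_self, add_zero]
lemma v4_xzz (x z : V4) : x + z + z = x := by rw [add_assoc, v4_add_self, add_zero]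

lemma triple_sum_eq (φ : V4 → ℤ) {a b c : V4} (hab : a ≠ b) (hac : a ≠ c) (hbc : b ≠ c)
    (ha0 : a ≠ 0) (hb0 : b ≠ 0) (hc0 : c ≠ 0) :
    ∑ p ∈ ({a, b, c} : Finset V4), ∑ q ∈ ({a, b, c} : Finset V4), ∑ r ∈ ({a, b, c} : Finset V4),
      (if p + q + r = 0 then φ p * φ q * φ r else 0)
    = if a + b + c = 0 then 6 * (φ a * φ b * φ c) else 0 := by
  have hins : ∀ g : V4 → ℤ, ∑ p ∈ ({a, b, c} : Finset V4), g p = g a + (g b + g c) := by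
    intro g
    rw [Finset.sum_insert (by simp [hab, hac]), Finset.sum_pair hbc]
  rw [hins]
  rw [hins, hins, hins]
  rw [hins, hins, hins, hins, hins, hins, hins, hins, hins]
  rw [v4_xxz a a, v4_xxz a b, v4_xxz a c, v4_xzx a b, v4_xzx a c, v4_xzz b a, v4_xzz c a,
      v4_xxz b a, v4_xxz b c, v4_xzx b a, v4_xzx b c, v4_xzz a b, v4_xzz c b,
      v4_xxz c a, v4_xxz c b, v4_xzx c a, v4_xzx c b, v4_xzz a c, v4_xzz b c,
      v4_xxz b b, v4_xxz c c]
  have pacb : (a + c + b : V4) = a + b + c := by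
    rw [add_assoc, add_comm c b, ← add_assoc]
  have pbac : (b + a + c : V4) = a + b + c := by rw [add_comm b a]
  have pbca : (b + c + a : V4) = a + b + c := by rw [add_comm (b + c) a, ← add_assoc]
  have pcab : (c + a + b : V4) = a + b + c := by rw [add_comm c a, pacb]
  have pcba : (c + b + a : V4) = a + b + c := by rw [add_comm (c + b) a, ← add_assoc, pacb]
  rw [pacb, pbac, pbca, pcab, pcba, if_neg ha0, if_neg hb0, if_neg hc0]
  by_cases h : (a + b + c : V4) = 0
  · simp only [if_pos h, if_neg ha0, if_neg hb0, if_neg hc0]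
    ring
  · simp only [if_neg h, if_neg ha0, if_neg hb0, if_neg hc0]
    ring

lemma arith_divN (N K J M SF : ℤ) (h1 : 0 = 48 * K - 16 * J) (h2 : 16 * SF = 2304 * K + 256 * J)
    (h3 : SF - 64 * N = 192 * M) (hN : 0 ≤ N) (hN4 : N ≤ 4) : N = 0 ∨ N = 3 := by omega

lemma arith3 (K J va vb vc T : ℤ)
    (h1 : 0 = 48 * K - 16 * J) (hkj : K + J ≤ 16) (hK0 : 0 ≤ K) (hJ0 : 0 ≤ J)
    (hva : va = 8 ∨ va = -8 ∨ va = 16 ∨ va = -16)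
    (hvb : vb = 8 ∨ vb = -8 ∨ vb = 16 ∨ vb = -16)
    (hvc : vc = 8 ∨ vc = -8 ∨ vc = 16 ∨ vc = -16)
    (h2 : 16 * (va ^ 2 + (vb ^ 2 + vc ^ 2)) = 2304 * K + 256 * J)
    (h3 : 16 * T = 110592 * K - 4096 * J)
    (hT : T = 6 * (va * vb * vc)) :
    (va = 16 ∨ va = -16) ∧ (vb = 16 ∨ vb = -16) ∧ (vc = 16 ∨ vc = -16) := by
  rcases hva with h|h|h|h <;> rcases hvb with h'|h'|h'|h' <;> rcases hvc with h''|h''|h''|h'' <;>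
    subst h <;> subst h' <;> subst h'' <;> norm_num at h2 h3 hT ⊢ <;> omega

lemma arith3_T0 (K J va vb vc : ℤ)
    (h1 : 0 = 48 * K - 16 * J) (hK0 : 0 ≤ K) (hJ0 : 0 ≤ J)
    (hva : va = 8 ∨ va = -8 ∨ va = 16 ∨ va = -16)
    (hvb : vb = 8 ∨ vb = -8 ∨ vb = 16 ∨ vb = -16)
    (hvc : vc = 8 ∨ vc = -8 ∨ vc = 16 ∨ vc = -16)
    (h2 : 16 * (va ^ 2 + (vb ^ 2 + vc ^ 2)) = 2304 * K + 256 * J)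
    (h3 : (16 : ℤ) * 0 = 110592 * K - 4096 * J) : False := by
  rcases hva with h|h|h|h <;> rcases hvb with h'|h'|h'|h' <;> rcases hvc with h''|h''|h''|h'' <;>
    subst h <;> subst h' <;> subst h'' <;> norm_num at h2 h3 <;> omega

lemma endgameLS (f : BF 4) {a b c : V4} {j : Fin 4}
    (ha16 : Fa f a = 16 ∨ Fa f a = -16) (hb16 : Fa f b = 16 ∨ Fa f b = -16)
    (hc16 : Fa f c = 16 ∨ Fa f c = -16)
    (habc : a + b + c = 0) (ha0 : a ≠ 0) (hb0 : b ≠ 0) (hc0 : c ≠ 0)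
    {S : Finset (Fin 4)} (hjS : Sᶜ = {j}) (hSne : bAnfCoeff f S ≠ 0) : False := by
  have hcj : c = a + b := (v4_add_eq_zero.1 habc).symm
  obtain ⟨d, hd0, hdj, hd16⟩ : ∃ d, d ≠ 0 ∧ d j = 0 ∧ (Fa f d = 16 ∨ Fa f d = -16) := by
    by_cases h1 : a j = 0
    · exact ⟨a, ha0, h1, ha16⟩
    · by_cases h2 : b j = 0
      · exact ⟨b, hb0, h2, hb16⟩
      · refine ⟨c, hc0, ?_, hc16⟩
        rw [hcj]
        show a j + b j = 0
        rw [zmod2_ne_zero h1, zmod2_ne_zero h2]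
        decide
  obtain ⟨cst, hcst⟩ := Fa_const_of_sq f hd16
  have hz := anf3_zero_of_linstruct f hd0 hdj hcst
  rw [anf_card3 f S j hjS] at hSne
  exact hSne hz

lemma lemmaB (f : BF 4) (hdeg : bDegLE f 3) {S : Finset (Fin 4)} (hS3 : S.card = 3)
    (hSne : bAnfCoeff f S ≠ 0) :
    5 ≤ (Finset.univ.filter (fun a : V4 => a ≠ 0 ∧ Fa f a ≠ 0)).card := by
  by_contra hlt
  push_neg at hlt
  have hQ : bAnfCoeff f Finset.univ = 0 := hdeg Finset.univ (by
    rw [Finset.card_univ]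
    simp)
  obtain ⟨j, hjS⟩ : ∃ j, Sᶜ = {j} := Finset.card_eq_one.1 (by
    rw [Finset.card_compl, hS3]
    rfl)
  set B := Finset.univ.filter (fun a : V4 => a ≠ 0 ∧ Fa f a ≠ 0) with hBdef
  have hBmem : ∀ a ∈ B, a ≠ 0 ∧ Fa f a ≠ 0 := fun a ha => (Finset.mem_filter.1 ha).2
  have hBcard : B.card ≤ 4 := Nat.lt_succ_iff.mp hlt
  have hval : ∀ a ∈ B, Fa f a = 8 ∨ Fa f a = -8 ∨ Fa f a = 16 ∨ Fa f a = -16 := by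
    intro a ha
    rcases Fa_cases f hQ (hBmem a ha).1 with h | h
    · exact absurd h (hBmem a ha).2
    · exact h
  have key : ∀ u : V4, 16 + (∑ a ∈ B, Fa f a * chi (vdot u a)) = (Wu f u) ^ 2 := by
    intro u
    rw [← Wu_sq f u]
    rw [← Finset.sum_filter_add_sum_filter_not Finset.univ (fun a : V4 => a ≠ 0 ∧ Fa f a ≠ 0)
      (fun a => Fa f a * chi (vdot u a))]
    rw [← hBdef, add_comm]
    congr 1
    rw [Finset.sum_eq_single_of_mem (0 : V4)
      (Finset.mem_filter.2 ⟨Finset.mem_univ _, by simp⟩)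
      (fun b hb hb0 => by
        have hnb := (Finset.mem_filter.1 hb).2
        have hFb : Fa f b = 0 := by
          by_contra hFb
          exact hnb ⟨hb0, hFb⟩
        rw [hFb, zero_mul])]
    rw [Fa_zero, vdot_zero_right, chi_zero, mul_one]
  have hs3 : ∀ u : V4, (∑ a ∈ B, Fa f a * chi (vdot u a)) = -16
      ∨ (∑ a ∈ B, Fa f a * chi (vdot u a)) = 0
      ∨ (∑ a ∈ B, Fa f a * chi (vdot u a)) = 48 := by
    intro u
    have hcard4 : (B.card : ℤ) ≤ 4 := by exact_mod_cast hBcard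
    have hb : |∑ a ∈ B, Fa f a * chi (vdot u a)| ≤ 64 := by
      calc |∑ a ∈ B, Fa f a * chi (vdot u a)| ≤ ∑ a ∈ B, |Fa f a * chi (vdot u a)| :=
            Finset.abs_sum_le_sum_abs _ _
        _ ≤ ∑ _a ∈ B, (16 : ℤ) := Finset.sum_le_sum (fun a ha => by
            rw [abs_mul, abs_chi, mul_one]
            rcases hval a ha with h|h|h|h <;> rw [h] <;> norm_num)
        _ = (B.card : ℤ) * 16 := by rw [Finset.sum_const, nsmul_eq_mul]
        _ ≤ 64 := by linarith
    obtain ⟨t, ht, ht1, ht2⟩ := Wu_mod4 f hQ u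
    have hk := key u
    rw [ht] at hk
    generalize hZ : (∑ a ∈ B, Fa f a * chi (vdot u a)) = Z at hb hk ⊢
    have hk2 : 16 + Z = 16 * t ^ 2 := by rw [hk]; ring
    have hb2 := abs_le.1 hb
    clear hk hb hZ key hlt
    interval_cases t <;> norm_num at hk2 <;> omega
  -- moments
  have M1 := classify_sum (fun u => ∑ a ∈ B, Fa f a * chi (vdot u a)) hs3 (fun z => z) rfl
  rw [moment1 f B (fun a ha => (hBmem a ha).1)] at M1
  have M2 := classify_sum (fun u => ∑ a ∈ B, Fa f a * chi (vdot u a)) hs3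
    (fun z => z ^ 2) (by norm_num)
  rw [moment2 f B] at M2
  have M3 := classify_sum (fun u => ∑ a ∈ B, Fa f a * chi (vdot u a)) hs3
    (fun z => z ^ 3) (by norm_num)
  rw [moment3 f B] at M3
  norm_num at M1 M2 M3
  -- counts bound
  have hkj : (Finset.univ.filter (fun u : V4 =>
        (∑ a ∈ B, Fa f a * chi (vdot u a)) = 48)).card
      + (Finset.univ.filter (fun u : V4 =>
        (∑ a ∈ B, Fa f a * chi (vdot u a)) = -16)).card ≤ 16 := by
    have hdisj : Disjoint (Finset.univ.filter (fun u : V4 =>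
          (∑ a ∈ B, Fa f a * chi (vdot u a)) = 48))
        (Finset.univ.filter (fun u : V4 =>
          (∑ a ∈ B, Fa f a * chi (vdot u a)) = -16)) := by
      rw [Finset.disjoint_left]
      intro u h1 h2
      have e1 := (Finset.mem_filter.1 h1).2
      have e2 := (Finset.mem_filter.1 h2).2
      rw [e1] at e2
      norm_num at e2
    calc (Finset.univ.filter _).card + (Finset.univ.filter _).card
        = ((Finset.univ.filter (fun u : V4 =>
            (∑ a ∈ B, Fa f a * chi (vdot u a)) = 48))
          ∪ (Finset.univ.filter (fun u : V4 =>
            (∑ a ∈ B, Fa f a * chi (vdot u a)) = -16))).card :=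
          (Finset.card_union_of_disjoint hdisj).symm
      _ ≤ (Finset.univ : Finset V4).card := Finset.card_le_card (Finset.subset_univ _)
      _ = 16 := card_univ_v4
  have hdvd192 : (192 : ℤ) ∣ ∑ a ∈ B, ((Fa f a) ^ 2 - 64) :=
    Finset.dvd_sum (fun a ha => by rcases hval a ha with h|h|h|h <;> rw [h] <;> norm_num)
  obtain ⟨M, hM⟩ := hdvd192
  have hSF : ∑ a ∈ B, ((Fa f a) ^ 2 - 64)
      = (∑ a ∈ B, (Fa f a) ^ 2) - 64 * B.card := by
    rw [Finset.sum_sub_distrib, Finset.sum_const, nsmul_eq_mul]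
    ring
  -- extract scalars
  set K := (Finset.univ.filter (fun u : V4 =>
      (∑ a ∈ B, Fa f a * chi (vdot u a)) = 48)).card with hKdef
  set J := (Finset.univ.filter (fun u : V4 =>
      (∑ a ∈ B, Fa f a * chi (vdot u a)) = -16)).card with hJdef
  have hN03 : B.card = 0 ∨ B.card = 3 := by
    have := arith_divN (B.card : ℤ) (K : ℤ) (J : ℤ) M (∑ a ∈ B, (Fa f a) ^ 2)
      (by linarith [M1]) (by linarith [M2]) (by rw [← hSF, hM]) (by exact Nat.cast_nonneg _)
      (by exact_mod_cast hBcard)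
    rcases this with h | h
    · left; exact_mod_cast h
    · right; exact_mod_cast h
  rcases hN03 with hN | hN
  · -- bent case
    have hBempty : B = ∅ := Finset.card_eq_zero.1 hN
    have hWsq : ∀ u : V4, (Wu f u) ^ 2 = 16 := by
      intro u
      have := key u
      rw [hBempty, Finset.sum_empty, add_zero] at this
      exact this.symm
    have hz := bent_cubic_coeff_zero f j (hWsq 0) (hWsq (ecoord j))
    rw [anf_card3 f S j hjS] at hSne
    exact hSne hz
  · -- B = {a,b,c}
    obtain ⟨a, b, c, hab, hac, hbc, hBeq⟩ := Finset.card_eq_three.1 hN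
    have hamem : a ∈ B := by rw [hBeq]; simp
    have hbmem : b ∈ B := by rw [hBeq]; simp
    have hcmem : c ∈ B := by rw [hBeq]; simp
    have hins : ∀ g : V4 → ℤ, ∑ p ∈ B, g p = g a + (g b + g c) := by
      intro g
      rw [hBeq, Finset.sum_insert (by simp [hab, hac]), Finset.sum_pair hbc]
    have hsum2 : ∑ p ∈ B, (Fa f p) ^ 2 = (Fa f a) ^ 2 + ((Fa f b) ^ 2 + (Fa f c) ^ 2) := hins _
    have htrip : ∑ p ∈ B, ∑ q ∈ B, ∑ r ∈ B,
        (if p + q + r = 0 then Fa f p * Fa f q * Fa f r else 0)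
        = if a + b + c = 0 then 6 * (Fa f a * Fa f b * Fa f c) else 0 := by
      rw [hBeq]
      exact triple_sum_eq (Fa f) hab hac hbc (hBmem a hamem).1 (hBmem b hbmem).1
        (hBmem c hcmem).1
    rw [hsum2] at M2
    rw [htrip] at M3
    by_cases habc : a + b + c = 0
    · rw [if_pos habc] at M3
      have hall := arith3 (K : ℤ) (J : ℤ) (Fa f a) (Fa f b) (Fa f c) _
        (by linarith [M1]) (by exact_mod_cast hkj) (by exact Nat.cast_nonneg _) (by exact Nat.cast_nonneg _)
        (hval a hamem) (hval b hbmem) (hval c hcmem) (by linarith [M2]) (by linarith [M3]) rfl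
      exact endgameLS f hall.1 hall.2.1 hall.2.2 habc (hBmem a hamem).1 (hBmem b hbmem).1
        (hBmem c hcmem).1 hjS hSne
    · rw [if_neg habc] at M3
      exact arith3_T0 (K : ℤ) (J : ℤ) (Fa f a) (Fa f b) (Fa f c)
        (by linarith [M1]) (by exact Nat.cast_nonneg _) (by exact Nat.cast_nonneg _)
        (hval a hamem) (hval b hbmem) (hval c hcmem) (by linarith [M2]) (by linarith [M3])

lemma vdot_zero_left (v : V4) : vdot 0 v = 0 := by unfold vdot; simp

lemma bDeriv_comp (F : VBF 4) (lam a x : V4) :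
    bDeriv a (bComp lam F) x = vdot lam (F (x + a) + F x) := by
  unfold bDeriv bComp
  rw [vdot_add_right]
  rfl

lemma lemmaA (F : VBF 4) (hF : bIsAPN F)
    (hcomp : ∀ lam : V4, lam ≠ 0 → bAnfCoeff (bComp lam F) Finset.univ = 0)
    {a : V4} (ha : a ≠ 0) :
    (Finset.univ.filter (fun lam : V4 => lam ≠ 0 ∧ Fa (bComp lam F) a ≠ 0)).card ≤ 4 := by
  set D : V4 → V4 := fun x => F (x + a) + F x with hD
  -- each fiber has exactly 2 elements
  have hfib : ∀ x : V4, (Finset.univ.filter (fun y => D y = D x)).card = 2 := by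
    intro x
    have hle : (Finset.univ.filter (fun y => D y = D x)).card ≤ 2 := hF a ha (D x)
    have hxa : x + a ≠ x := by
      intro h
      have h2 := congrArg (fun z => z + x) h
      rw [add_comm x a, add_assoc, v4_add_self, add_zero] at h2
      exact ha h2
    have hsub : ({x, x + a} : Finset V4) ⊆ Finset.univ.filter (fun y => D y = D x) := by
      intro y hy
      rcases Finset.mem_insert.1 hy with rfl | hy
      · exact Finset.mem_filter.2 ⟨Finset.mem_univ _, rfl⟩
      · rw [Finset.mem_singleton] at hy
        subst hy
        refine Finset.mem_filter.2 ⟨Finset.mem_univ _, ?_⟩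
        show F (x + a + a) + F (x + a) = D x
        rw [add_assoc, v4_add_self, add_zero, add_comm (F x)]
    have hge : 2 ≤ (Finset.univ.filter (fun y => D y = D x)).card := by
      have := Finset.card_le_card hsub
      rwa [Finset.card_pair hxa.symm] at this
    omega
  -- Parseval
  have hpars : ∑ lam : V4, (∑ x : V4, chi (vdot lam (D x))) ^ 2 = 512 := by
    have expand : ∀ lam : V4, (∑ x : V4, chi (vdot lam (D x))) ^ 2
        = ∑ x : V4, ∑ y : V4, chi (vdot lam (D x + D y)) := by
      intro lam
      rw [sq, Finset.sum_mul_sum]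
      apply Finset.sum_congr rfl; intro x _
      apply Finset.sum_congr rfl; intro y _
      rw [vdot_add_right lam (D x) (D y), chi_add]
    rw [Finset.sum_congr rfl (fun lam _ => expand lam), Finset.sum_comm]
    have hx : ∀ x : V4, ∑ lam : V4, ∑ y : V4, chi (vdot lam (D x + D y)) = 32 := by
      intro x
      rw [Finset.sum_comm]
      have hy : ∀ y : V4, ∑ lam : V4, chi (vdot lam (D x + D y))
          = if D y = D x then (16 : ℤ) else 0 := by
        intro y
        rw [sum_chi_total]
        congr 1
        rw [eq_iff_iff]
        constructor
        · intro h; exact (v4_add_eq_zero.1 h).symm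
        · intro h; rw [h]; exact v4_add_self _
      rw [Finset.sum_congr rfl (fun y _ => hy y)]
      rw [← Finset.sum_filter]
      rw [Finset.sum_const, hfib x, nsmul_eq_mul]
      norm_num
    rw [Finset.sum_congr rfl (fun x _ => hx x), Finset.sum_const, card_univ_v4]
    norm_num
  -- identify with Fa of components
  have hFa : ∀ lam : V4, Fa (bComp lam F) a = ∑ x : V4, chi (vdot lam (D x)) := by
    intro lam
    unfold Fa
    apply Finset.sum_congr rfl
    intro x _
    rw [bDeriv_comp]
  -- split off lam = 0
  have hzero : (∑ x : V4, chi (vdot (0 : V4) (D x))) ^ 2 = 256 := by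
    have : ∀ x : V4, chi (vdot (0 : V4) (D x)) = 1 := by
      intro x; rw [vdot_zero_left]; rfl
    rw [Finset.sum_congr rfl (fun x _ => this x), Finset.sum_const, card_univ_v4]
    norm_num
  have hsplit : ∑ lam ∈ Finset.univ.filter (fun lam : V4 => ¬ lam = 0),
      (∑ x : V4, chi (vdot lam (D x))) ^ 2 = 256 := by
    have := Finset.sum_filter_add_sum_filter_not Finset.univ (fun lam : V4 => lam = 0)
      (fun lam => (∑ x : V4, chi (vdot lam (D x))) ^ 2)
    have h0 : ∑ lam ∈ Finset.univ.filter (fun lam : V4 => lam = 0),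
        (∑ x : V4, chi (vdot lam (D x))) ^ 2 = 256 := by
      rw [Finset.filter_eq']
      rw [if_pos (Finset.mem_univ _), Finset.sum_singleton, hzero]
    rw [h0] at this
    rw [hpars] at this
    linarith
  -- bad set bound
  have hsubset : Finset.univ.filter (fun lam : V4 => lam ≠ 0 ∧ Fa (bComp lam F) a ≠ 0)
      ⊆ Finset.univ.filter (fun lam : V4 => ¬ lam = 0) := by
    intro lam hlam
    exact Finset.mem_filter.2 ⟨Finset.mem_univ _, (Finset.mem_filter.1 hlam).2.1⟩
  have hlower : ∀ lam ∈ Finset.univ.filter (fun lam : V4 => lam ≠ 0 ∧ Fa (bComp lam F) a ≠ 0),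
      (64 : ℤ) ≤ (∑ x : V4, chi (vdot lam (D x))) ^ 2 := by
    intro lam hlam
    obtain ⟨hlam0, hlamF⟩ := (Finset.mem_filter.1 hlam).2
    rcases Fa_cases (bComp lam F) (hcomp lam hlam0) ha with h | h | h | h | h
    · exact absurd h hlamF
    all_goals (rw [← hFa, h]; norm_num)
  have hbound : (64 : ℤ) * ((Finset.univ.filter
      (fun lam : V4 => lam ≠ 0 ∧ Fa (bComp lam F) a ≠ 0)).card : ℤ) ≤ 256 := by
    calc (64 : ℤ) * ((Finset.univ.filter
          (fun lam : V4 => lam ≠ 0 ∧ Fa (bComp lam F) a ≠ 0)).card : ℤ)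
        = ∑ _lam ∈ Finset.univ.filter (fun lam : V4 => lam ≠ 0 ∧ Fa (bComp lam F) a ≠ 0),
            (64 : ℤ) := by rw [Finset.sum_const, nsmul_eq_mul]; ring
      _ ≤ ∑ lam ∈ Finset.univ.filter (fun lam : V4 => lam ≠ 0 ∧ Fa (bComp lam F) a ≠ 0),
            (∑ x : V4, chi (vdot lam (D x))) ^ 2 := Finset.sum_le_sum hlower
      _ ≤ ∑ lam ∈ Finset.univ.filter (fun lam : V4 => ¬ lam = 0),
            (∑ x : V4, chi (vdot lam (D x))) ^ 2 := by
          apply Finset.sum_le_sum_of_subset_of_nonneg hsubset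
          intro lam _ _
          positivity
      _ = 256 := hsplit
  have : ((Finset.univ.filter
      (fun lam : V4 => lam ≠ 0 ∧ Fa (bComp lam F) a ≠ 0)).card : ℤ) ≤ 4 := by linarith
  exact_mod_cast this

lemma deg_facts (f : BF 4) (h3 : bAlgDeg f = 3) :
    bDegLE f 3 ∧ ∃ S : Finset (Fin 4), S.card = 3 ∧ bAnfCoeff f S ≠ 0 := by
  have hd4 : bDegLE f 4 := by
    intro S hS
    exfalso
    have h := Finset.card_le_univ S
    have h4 : Fintype.card (Fin 4) = 4 := Fintype.card_fin 4
    omega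
  have hne : {d | bDegLE f d}.Nonempty := ⟨4, hd4⟩
  have hmem := Nat.sInf_mem hne
  have heq : sInf {d | bDegLE f d} = 3 := h3
  rw [heq] at hmem
  refine ⟨hmem, ?_⟩
  have hnot2 : ¬ bDegLE f 2 := by
    intro h
    have hle := Nat.sInf_le (show 2 ∈ {d | bDegLE f d} from h)
    rw [heq] at hle
    omega
  unfold bDegLE at hnot2
  push_neg at hnot2
  obtain ⟨S, hS2, hSne⟩ := hnot2
  have hcard4 : S.card ≤ 4 := by
    have h := Finset.card_le_univ S
    have h4 : Fintype.card (Fin 4) = 4 := Fintype.card_fin 4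
    omega
  rcases Nat.lt_or_ge S.card 4 with h | h
  · exact ⟨S, by omega, hSne⟩
  · exfalso
    have hSuniv : S = Finset.univ := Finset.eq_univ_of_card S (by
      rw [show Fintype.card (Fin 4) = 4 from rfl]; omega)
    refine hSne ?_
    rw [hSuniv]
    exact hmem Finset.univ (by
      rw [Finset.card_univ, show Fintype.card (Fin 4) = 4 from rfl]; omega)

lemma card_nonzero_v4 : (Finset.univ.filter (fun lam : V4 => ¬ lam = 0)).card = 15 := by decide

theorem stmt18' (F : VBF 4) (hF : bIsAPN F)
    (hcubic : ∀ lam : Fin 4 → ZMod 2, lam ≠ 0 → bAlgDeg (bComp lam F) = 3) :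
    False := by
  have hfacts : ∀ lam : V4, lam ≠ 0 → bDegLE (bComp lam F) 3
      ∧ ∃ S : Finset (Fin 4), S.card = 3 ∧ bAnfCoeff (bComp lam F) S ≠ 0 :=
    fun lam hlam => deg_facts _ (hcubic lam hlam)
  have hcomp : ∀ lam : V4, lam ≠ 0 → bAnfCoeff (bComp lam F) Finset.univ = 0 := by
    intro lam hlam
    exact (hfacts lam hlam).1 Finset.univ (by
      rw [Finset.card_univ, show Fintype.card (Fin 4) = 4 from rfl]; omega)
  -- double counting
  have hswap : ∑ lam : V4, (Finset.univ.filter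
        (fun a : V4 => (lam ≠ 0 ∧ a ≠ 0) ∧ Fa (bComp lam F) a ≠ 0)).card
      = ∑ a : V4, (Finset.univ.filter
        (fun lam : V4 => (lam ≠ 0 ∧ a ≠ 0) ∧ Fa (bComp lam F) a ≠ 0)).card := by
    have h1 : ∀ lam : V4, (Finset.univ.filter
          (fun a : V4 => (lam ≠ 0 ∧ a ≠ 0) ∧ Fa (bComp lam F) a ≠ 0)).card
        = ∑ a : V4, if (lam ≠ 0 ∧ a ≠ 0) ∧ Fa (bComp lam F) a ≠ 0 then 1 else 0 :=
      fun lam => Finset.card_filter _ _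
    have h2 : ∀ a : V4, (Finset.univ.filter
          (fun lam : V4 => (lam ≠ 0 ∧ a ≠ 0) ∧ Fa (bComp lam F) a ≠ 0)).card
        = ∑ lam : V4, if (lam ≠ 0 ∧ a ≠ 0) ∧ Fa (bComp lam F) a ≠ 0 then 1 else 0 :=
      fun a => Finset.card_filter _ _
    rw [Finset.sum_congr rfl (fun lam _ => h1 lam), Finset.sum_congr rfl (fun a _ => h2 a)]
    exact Finset.sum_comm
  -- lower bound
  have hlow : 75 ≤ ∑ lam : V4, (Finset.univ.filter
      (fun a : V4 => (lam ≠ 0 ∧ a ≠ 0) ∧ Fa (bComp lam F) a ≠ 0)).card := by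
    have hrow : ∀ lam ∈ Finset.univ.filter (fun lam : V4 => ¬ lam = 0),
        5 ≤ (Finset.univ.filter
          (fun a : V4 => (lam ≠ 0 ∧ a ≠ 0) ∧ Fa (bComp lam F) a ≠ 0)).card := by
      intro lam hlam
      have hlam0 : lam ≠ 0 := (Finset.mem_filter.1 hlam).2
      obtain ⟨S, hS3, hSne⟩ := (hfacts lam hlam0).2
      have hrw : Finset.univ.filter
            (fun a : V4 => (lam ≠ 0 ∧ a ≠ 0) ∧ Fa (bComp lam F) a ≠ 0)
          = Finset.univ.filter (fun a : V4 => a ≠ 0 ∧ Fa (bComp lam F) a ≠ 0) := by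
        apply Finset.filter_congr
        intro a _
        constructor
        · intro h; exact ⟨h.1.2, h.2⟩
        · intro h; exact ⟨⟨hlam0, h.1⟩, h.2⟩
      rw [hrw]
      exact lemmaB (bComp lam F) (hfacts lam hlam0).1 hS3 hSne
    calc (75 : ℕ) = (Finset.univ.filter (fun lam : V4 => ¬ lam = 0)).card * 5 := by
          rw [card_nonzero_v4]
      _ = (Finset.univ.filter (fun lam : V4 => ¬ lam = 0)).card • 5 := by
          rw [smul_eq_mul]
      _ ≤ ∑ lam ∈ Finset.univ.filter (fun lam : V4 => ¬ lam = 0),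
            (Finset.univ.filter
              (fun a : V4 => (lam ≠ 0 ∧ a ≠ 0) ∧ Fa (bComp lam F) a ≠ 0)).card :=
          Finset.card_nsmul_le_sum _ _ _ hrow
      _ ≤ ∑ lam : V4, (Finset.univ.filter
            (fun a : V4 => (lam ≠ 0 ∧ a ≠ 0) ∧ Fa (bComp lam F) a ≠ 0)).card := by
          apply Finset.sum_le_sum_of_subset_of_nonneg (Finset.filter_subset _ _)
          intro lam _ _
          exact Nat.zero_le _
  -- upper bound
  have hup : ∑ a : V4, (Finset.univ.filter
      (fun lam : V4 => (lam ≠ 0 ∧ a ≠ 0) ∧ Fa (bComp lam F) a ≠ 0)).card ≤ 64 := by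
    have hcol : ∀ a ∈ (Finset.univ : Finset V4), (Finset.univ.filter
        (fun lam : V4 => (lam ≠ 0 ∧ a ≠ 0) ∧ Fa (bComp lam F) a ≠ 0)).card ≤ 4 := by
      intro a _
      by_cases ha : a = 0
      · subst ha
        have : Finset.univ.filter
            (fun lam : V4 => (lam ≠ 0 ∧ (0 : V4) ≠ 0) ∧ Fa (bComp lam F) 0 ≠ 0) = ∅ := by
          apply Finset.filter_false_of_mem
          intro lam _
          intro h
          exact h.1.2 rfl
        rw [this]
        norm_num
      · have hrw : Finset.univ.filter
            (fun lam : V4 => (lam ≠ 0 ∧ a ≠ 0) ∧ Fa (bComp lam F) a ≠ 0)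
            = Finset.univ.filter (fun lam : V4 => lam ≠ 0 ∧ Fa (bComp lam F) a ≠ 0) := by
          apply Finset.filter_congr
          intro lam _
          constructor
          · intro h; exact ⟨h.1.1, h.2⟩
          · intro h; exact ⟨⟨h.1, ha⟩, h.2⟩
        rw [hrw]
        exact lemmaA F hF hcomp ha
    calc ∑ a : V4, (Finset.univ.filter
          (fun lam : V4 => (lam ≠ 0 ∧ a ≠ 0) ∧ Fa (bComp lam F) a ≠ 0)).card
        ≤ (Finset.univ : Finset V4).card • 4 := Finset.sum_le_card_nsmul _ _ _ hcol
      _ = 64 := by rw [card_univ_v4]; rfl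
  rw [hswap] at hlow
  exact absurd (le_trans hlow hup) (by norm_num)


theorem stmt18 (F : VBF 4) (hF : bIsAPN F)
    (hcubic : ∀ lam : Fin 4 → ZMod 2, lam ≠ 0 → bAlgDeg (bComp lam F) = 3) :
    False := stmt18' F hF hcubic
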